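/- Let p be an odd prime and k ≥ 1 an integer. Then the ring ZMod(p^k) of integers modulo p^k is a halidon ring with index m = p − 1; moreover, if ω ∈ ZMod(p^k) is a unit of multiplicative order φ(p^k) = p^{k−1}(p−1), then ω_1 = ω^{p^{k−1}} is a primitive (p−1)-th root of unity in ZMod(p^k). -/

import Mathlib

def IsPrimitiveHalidonRoot {R : Type*} [CommRing R] (m : ℕ) (ω : R) : Prop :=
  ω ^ m = 1 ∧ (∀ k : ℕ, 0 < k → k < m → ω ^ k ≠ 1) ∧
    ∀ k : ℕ, 0 < k → k < m → ∑ r ∈ Finset.range m, ω ^ (r * k) = 0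

def IsHalidonRing (R : Type*) [CommRing R] (m : ℕ) : Prop :=
  IsUnit (m : R) ∧ ∃ ω : R, IsPrimitiveHalidonRoot m ω

section Aux

variable {p k : ℕ}

lemma coprime_pred (hp : p.Prime) : Nat.Coprime p (p - 1) := by
  have h1 : 1 ≤ p := hp.one_lt.le
  exact (Nat.coprime_self_sub_right h1).mpr (Nat.coprime_one_right p)

/-- Any unit in the kernel of reduction `ZMod (p^k) → ZMod p` has order dividing `p^(k-1)`. -/
lemma ker_orderOf_dvd (hp : p.Prime) (hk : 1 ≤ k)
    (u : (ZMod (p ^ k))ˣ) (hu : ZMod.unitsMap (dvd_pow_self p (by omega : k ≠ 0)) u = 1) :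
    orderOf u ∣ p ^ (k - 1) := by
  haveI : Fact p.Prime := ⟨hp⟩
  haveI : NeZero (p ^ k) := ⟨pow_ne_zero _ hp.pos.ne'⟩
  set f := ZMod.unitsMap (dvd_pow_self p (by omega : k ≠ 0)) with hf
  have hsurj : Function.Surjective f := ZMod.unitsMap_surjective _
  have e : ((ZMod (p ^ k))ˣ ⧸ f.ker) ≃* (ZMod p)ˣ :=
    QuotientGroup.quotientKerEquivOfSurjective f hsurj
  have hcardG : Nat.card (ZMod (p ^ k))ˣ = p ^ (k - 1) * (p - 1) := by
    rw [Nat.card_eq_fintype_card, ZMod.card_units_eq_totient,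
      Nat.totient_prime_pow hp (by omega : 0 < k)]
  have hcardQ : Nat.card ((ZMod (p ^ k))ˣ ⧸ f.ker) = p - 1 := by
    rw [Nat.card_congr e.toEquiv, Nat.card_eq_fintype_card, ZMod.card_units_eq_totient,
      Nat.totient_prime hp]
  have hcard : Nat.card (ZMod (p ^ k))ˣ
      = Nat.card ((ZMod (p ^ k))ˣ ⧸ f.ker) * Nat.card f.ker := by
    simpa using Subgroup.card_eq_card_quotient_mul_card_subgroup f.ker
  have hker : Nat.card f.ker = p ^ (k - 1) := by
    have hpos : 0 < p - 1 := by have := hp.one_lt; omega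
    rw [hcardG, hcardQ] at hcard
    have h' : (p - 1) * Nat.card f.ker = (p - 1) * p ^ (k - 1) := by
      rw [← hcard]; ring
    exact Nat.eq_of_mul_eq_mul_left hpos h'
  have := f.ker.orderOf_dvd_natCard (x := u) (by simpa [MonoidHom.mem_ker] using hu)
  rwa [hker] at this

/-- A unit of order `p - 1` in `ZMod (p ^ k)` gives a primitive halidon root. -/
lemma unit_order_gives_root (hp : p.Prime) (hk : 1 ≤ k)
    (x : (ZMod (p ^ k))ˣ) (hx : orderOf x = p - 1) :
    IsPrimitiveHalidonRoot (p - 1) ((x : ZMod (p ^ k))) := by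
  haveI : Fact p.Prime := ⟨hp⟩
  haveI : NeZero (p ^ k) := ⟨pow_ne_zero _ hp.pos.ne'⟩
  have hox : orderOf (x : ZMod (p ^ k)) = p - 1 := by rw [orderOf_units, hx]
  refine ⟨?_, ?_, ?_⟩
  · rw [← hox]; exact pow_orderOf_eq_one _
  · intro j hj0 hj h1
    have := Nat.le_of_dvd hj0 (orderOf_dvd_of_pow_eq_one h1)
    omega
  · intro j hj0 hj
    set y : (ZMod (p ^ k))ˣ := x ^ j with hy
    -- the reduction of y mod p is not 1
    have hyne : ZMod.unitsMap (dvd_pow_self p (by omega : k ≠ 0)) y ≠ 1 := by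
      intro h
      have h1 : orderOf y ∣ p ^ (k - 1) := ker_orderOf_dvd hp hk y h
      have h2 : orderOf y ∣ p - 1 := hx ▸ orderOf_pow_dvd j
      have hcop : Nat.Coprime (p ^ (k - 1)) (p - 1) :=
        Nat.Coprime.pow_left _ (coprime_pred hp)
      have : orderOf y = 1 := Nat.eq_one_of_dvd_coprimes hcop h1 h2
      have : y = 1 := orderOf_eq_one_iff.mp this
      have : orderOf x ∣ j := orderOf_dvd_of_pow_eq_one (by rw [← hy, this])
      have := Nat.le_of_dvd hj0 this
      omega
    -- hence (↑y - 1) is a unit of ZMod (p^k)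
    set z : ZMod (p ^ k) := (y : ZMod (p ^ k)) - 1 with hz
    have hzmod : ((z.val : ℕ) : ZMod p) ≠ 0 := by
      intro h0
      apply hyne
      have hcast : (ZMod.castHom (dvd_pow_self p (by omega : k ≠ 0)) (ZMod p)) z = 0 := by
        rw [ZMod.castHom_apply, ← ZMod.natCast_val]; exact h0
      have : (ZMod.castHom (dvd_pow_self p (by omega : k ≠ 0)) (ZMod p)) (y : ZMod (p ^ k)) = 1 := by
        have := hcast
        rw [hz, map_sub, map_one, sub_eq_zero] at this
        exact this
      ext
      simpa [ZMod.unitsMap_def] using this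
    have hzunit : IsUnit z := by
      have hdvd : ¬ p ∣ z.val := fun h =>
        hzmod ((ZMod.natCast_eq_zero_iff _ _).mpr h)
      have hcop : Nat.Coprime z.val (p ^ k) :=
        Nat.Coprime.pow_right _ ((Nat.Prime.coprime_iff_not_dvd hp).mpr hdvd).symm
      have := (ZMod.isUnit_iff_coprime z.val (p ^ k)).mpr hcop
      rwa [ZMod.natCast_val, ZMod.cast_id] at this
    -- geometric sum
    have hsum : (∑ r ∈ Finset.range (p - 1), ((y : ZMod (p ^ k))) ^ r) * z = 0 := by
      rw [hz, geom_sum_mul, sub_eq_zero]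
      rw [hy, Units.val_pow_eq_pow_val, ← pow_mul, mul_comm, pow_mul, ← Units.val_pow_eq_pow_val,
        ← Units.val_pow_eq_pow_val]
      rw [← hx, pow_orderOf_eq_one, one_pow, Units.val_one]
    have : ∑ r ∈ Finset.range (p - 1), ((y : ZMod (p ^ k))) ^ r = 0 :=
      (hzunit.mul_left_eq_zero).mp hsum
    calc ∑ r ∈ Finset.range (p - 1), (x : ZMod (p ^ k)) ^ (r * j)
        = ∑ r ∈ Finset.range (p - 1), ((y : ZMod (p ^ k))) ^ r := by
          refine Finset.sum_congr rfl fun r _ => ?_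
          rw [hy, Units.val_pow_eq_pow_val, ← pow_mul, mul_comm]
      _ = 0 := this

end Aux

/-- For an odd prime `p` and `k ≥ 1`, the ring `ZMod (p ^ k)` is a halidon ring with
index `p - 1`; moreover, if `ω` is a unit of `ZMod (p ^ k)` of multiplicative order
`φ(p ^ k) = p ^ (k - 1) * (p - 1)`, then `ω ^ (p ^ (k - 1))` is a primitive
`(p - 1)`-th root of unity in `ZMod (p ^ k)`. -/
theorem zmod_prime_pow_halidon (p k : ℕ) (hp : p.Prime) (hodd : Odd p) (hk : 1 ≤ k) :
    IsHalidonRing (ZMod (p ^ k)) (p - 1) ∧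
      ∀ ω : ZMod (p ^ k), IsUnit ω → orderOf ω = p ^ (k - 1) * (p - 1) →
        IsPrimitiveHalidonRoot (p - 1) (ω ^ (p ^ (k - 1))) := by
  haveI : Fact p.Prime := ⟨hp⟩
  haveI : NeZero (p ^ k) := ⟨pow_ne_zero _ hp.pos.ne'⟩
  have hp1 : 1 < p := hp.one_lt
  constructor
  · constructor
    · -- (p - 1 : ZMod (p^k)) is a unit
      have hcop : Nat.Coprime (p - 1) (p ^ k) :=
        Nat.Coprime.pow_right _ (coprime_pred hp).symm
      exact (ZMod.isUnit_iff_coprime (p - 1) (p ^ k)).mpr hcop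
    · -- existence of a primitive (p-1)-th root
      obtain ⟨g, hg⟩ := IsCyclic.exists_generator (α := (ZMod p)ˣ)
      have hog : orderOf g = p - 1 := by
        rw [orderOf_eq_card_of_forall_mem_zpowers hg, Nat.card_eq_fintype_card,
          ZMod.card_units_eq_totient, Nat.totient_prime hp]
      obtain ⟨u, hu⟩ := ZMod.unitsMap_surjective (dvd_pow_self p (by omega : k ≠ 0)) g
      have hdvd : p - 1 ∣ orderOf u := by
        have := orderOf_map_dvd (ZMod.unitsMap (dvd_pow_self p (by omega : k ≠ 0))) u
        rw [hu, hog] at this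
        exact this
      set n := orderOf u with hn
      have hn0 : n ≠ 0 := by
        have : (0 : ℕ) < n := orderOf_pos u
        omega
      set d := n / (p - 1) with hd
      have hdn : d ∣ n := Nat.div_dvd_of_dvd hdvd
      have hd0 : d ≠ 0 := by
        intro h
        rw [hd] at h
        rcases (Nat.div_eq_zero_iff.mp h).resolve_left (by omega) with h'
        · have := Nat.le_of_dvd (by omega) hdvd; omega
      have hord : orderOf (u ^ d) = p - 1 := by
        rw [orderOf_pow, ← hn, Nat.gcd_eq_right hdn, hd,
          Nat.div_div_self hdvd hn0]
      exact ⟨((u ^ d : (ZMod (p ^ k))ˣ) : ZMod (p ^ k)), unit_order_gives_root hp hk _ hord⟩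
  · intro ω hω hord
    obtain ⟨υ, hυ⟩ := hω
    have hoυ : orderOf υ = p ^ (k - 1) * (p - 1) := by
      rw [← orderOf_units, hυ, hord]
    have hpow : ω ^ (p ^ (k - 1)) = ((υ ^ (p ^ (k - 1)) : (ZMod (p ^ k))ˣ) : ZMod (p ^ k)) := by
      rw [← hυ, Units.val_pow_eq_pow_val]
    rw [hpow]
    apply unit_order_gives_root hp hk
    rw [orderOf_pow, hoυ, Nat.gcd_eq_right (dvd_mul_right _ _),
      Nat.mul_div_cancel_left _ (Nat.pow_pos hp.pos)]
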